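/- Let ε ∈ (0,1), λ(t) = ε(1-t²)² and f₀(t) = exp(-1/(1-t²)) on (-1,1). Then there exists a constant C > 0 independent of ε such that |λ(t)λ'(t) f₀(t)| + λ(t)²|f₀'(t)| ≤ C ε² f₀(t) for all t ∈ (-1,1). -/

import Mathlib

theorem stmt_10 :
    ∃ C > (0 : ℝ), ∀ ε : ℝ, 0 < ε → ε < 1 → ∀ t ∈ Set.Ioo (-1 : ℝ) 1,
      |(ε * (1 - t ^ 2) ^ 2) * deriv (fun s : ℝ => ε * (1 - s ^ 2) ^ 2) t
          * Real.exp (-1 / (1 - t ^ 2))|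
        + (ε * (1 - t ^ 2) ^ 2) ^ 2 * |deriv (fun s : ℝ => Real.exp (-1 / (1 - s ^ 2))) t|
      ≤ C * ε ^ 2 * Real.exp (-1 / (1 - t ^ 2)) := by
  refine ⟨6, by norm_num, ?_⟩
  intro ε hε hε1 t ht
  obtain ⟨ht1, ht2⟩ := ht
  have hu : (0:ℝ) < 1 - t ^ 2 := by nlinarith
  have hne : (1 - t ^ 2) ≠ 0 := ne_of_gt hu
  have hE : 0 < Real.exp (-1 / (1 - t ^ 2)) := Real.exp_pos _
  set E := Real.exp (-1 / (1 - t ^ 2)) with hEdef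
  have hb : HasDerivAt (fun s : ℝ => (1 - s ^ 2)) (-(2 * t)) t := by
    simpa using ((hasDerivAt_pow 2 t).const_sub 1)
  have h1 : HasDerivAt (fun s : ℝ => ε * (1 - s ^ 2) ^ 2)
      (ε * (2 * (1 - t ^ 2) * (-(2 * t)))) t := by
    simpa [mul_comm, mul_assoc, mul_left_comm] using ((hb.pow 2).const_mul ε)
  have hinner : HasDerivAt (fun s : ℝ => -1 / (1 - s ^ 2))
      (-(2 * t) / (1 - t ^ 2) ^ 2) t := by
    have := (hasDerivAt_const t (-1 : ℝ)).fun_div hb hne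
    refine this.congr_deriv ?_
    ring
  have h2 : HasDerivAt (fun s : ℝ => Real.exp (-1 / (1 - s ^ 2)))
      (E * (-(2 * t) / (1 - t ^ 2) ^ 2)) t := by
    simpa [hEdef] using hinner.exp
  rw [h1.deriv, h2.deriv]
  have ht' : |t| ≤ 1 := by
    rw [abs_le]; constructor <;> nlinarith
  have e1 : |ε * (1 - t ^ 2) ^ 2 * (ε * (2 * (1 - t ^ 2) * (-(2 * t)))) * E|
      = (4 * ε ^ 2 * (1 - t ^ 2) ^ 3 * E) * |t| := by
    have : ε * (1 - t ^ 2) ^ 2 * (ε * (2 * (1 - t ^ 2) * (-(2 * t)))) * E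
        = (4 * ε ^ 2 * (1 - t ^ 2) ^ 3 * E) * (-t) := by ring
    rw [this, abs_mul, abs_neg, abs_of_pos (by positivity)]
  have e2 : |E * (-(2 * t) / (1 - t ^ 2) ^ 2)|
      = (2 * E / (1 - t ^ 2) ^ 2) * |t| := by
    have : E * (-(2 * t) / (1 - t ^ 2) ^ 2) = (2 * E / (1 - t ^ 2) ^ 2) * (-t) := by
      field_simp
    rw [this, abs_mul, abs_neg, abs_of_pos (by positivity)]
  rw [e1, e2]
  have key : (ε * (1 - t ^ 2) ^ 2) ^ 2 * ((2 * E / (1 - t ^ 2) ^ 2) * |t|)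
      = 2 * ε ^ 2 * (1 - t ^ 2) ^ 2 * E * |t| := by
    field_simp
  rw [key]
  have hu1 : (1 - t ^ 2) ≤ 1 := by nlinarith
  have habs : 0 ≤ |t| := abs_nonneg t
  have hε2 : (0:ℝ) < ε ^ 2 := by positivity
  have hu3 : (1 - t ^ 2) ^ 3 ≤ 1 := by nlinarith
  have hu2 : (1 - t ^ 2) ^ 2 ≤ 1 := by nlinarith
  nlinarith [mul_nonneg (mul_nonneg (mul_nonneg hε2.le hE.le) (pow_nonneg hu.le 3))
      (sub_nonneg.2 ht'),
    mul_nonneg (mul_nonneg hε2.le hE.le) (sub_nonneg.2 hu3),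
    mul_nonneg (mul_nonneg (mul_nonneg hε2.le hE.le) (pow_nonneg hu.le 2))
      (sub_nonneg.2 ht'),
    mul_nonneg (mul_nonneg hε2.le hE.le) (sub_nonneg.2 hu2)]
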